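/- Let r > 0. For every continuous g : [0,r] → ℝ there exists a unique h ∈ C²₀([0,r]) such that h''(x) + h'(x)/x = g(x) for all x ∈ (0,r]. Moreover the solution satisfies ‖h''‖_{C⁰([0,r])} ≤ (3/2) ‖g‖_{C⁰([0,r])}, and it is given explicitly by h(x) = ∫₀ˣ (log x - log t) t g(t) dt. -/

import Mathlib

open Set

/-- `h` belongs to `C²₀([0,r])` (i.e. `h ∈ C²([0,r])` with `h(0) = h'(0) = 0`)
and satisfies `h''(x) + h'(x)/x = g(x)` for all `x ∈ (0, r]`. -/
def LinSol (r : ℝ) (g h : ℝ → ℝ) : Prop :=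
  ContDiffOn ℝ 2 h (Icc 0 r) ∧ h 0 = 0 ∧ derivWithin h (Icc 0 r) 0 = 0 ∧
  ∀ x ∈ Ioc (0:ℝ) r,
    derivWithin (derivWithin h (Icc 0 r)) (Icc 0 r) x + derivWithin h (Icc 0 r) x / x = g x

lemma linsol_unique (r : ℝ) (hr : 0 < r) (g h1 h2 : ℝ → ℝ)
    (H1 : LinSol r g h1) (H2 : LinSol r g h2) : EqOn h1 h2 (Icc 0 r) := by
  have husd : UniqueDiffOn ℝ (Icc (0:ℝ) r) := uniqueDiffOn_Icc hr
  obtain ⟨S1, h10, d10, ode1⟩ := H1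
  obtain ⟨S2, h20, d20, ode2⟩ := H2
  rw [show (2:WithTop ℕ∞) = 1 + 1 by norm_num, contDiffOn_succ_iff_derivWithin husd] at S1 S2
  obtain ⟨D1, -, C1⟩ := S1
  obtain ⟨D2, -, C2⟩ := S2
  have D1' : DifferentiableOn ℝ (derivWithin h1 (Icc 0 r)) (Icc 0 r) :=
    C1.differentiableOn one_ne_zero
  have D2' : DifferentiableOn ℝ (derivWithin h2 (Icc 0 r)) (Icc 0 r) :=
    C2.differentiableOn one_ne_zero
  set u : ℝ → ℝ := fun x => derivWithin h1 (Icc 0 r) x - derivWithin h2 (Icc 0 r) x with hu_def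
  have hv : ∀ x ∈ Icc (0:ℝ) r, HasDerivWithinAt (fun x => x * u x) 0 (Icc 0 r) x := by
    intro x hx
    have hU : HasDerivWithinAt u
        (derivWithin (derivWithin h1 (Icc 0 r)) (Icc 0 r) x
          - derivWithin (derivWithin h2 (Icc 0 r)) (Icc 0 r) x) (Icc 0 r) x :=
      ((D1' x hx).hasDerivWithinAt).sub ((D2' x hx).hasDerivWithinAt)
    have hxU : HasDerivWithinAt (fun x => x * u x) (1 * u x + x *
        (derivWithin (derivWithin h1 (Icc 0 r)) (Icc 0 r) x
          - derivWithin (derivWithin h2 (Icc 0 r)) (Icc 0 r) x)) (Icc 0 r) x :=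
      (hasDerivWithinAt_id x (Icc 0 r)).mul hU
    convert hxU using 1
    rcases eq_or_lt_of_le hx.1 with h0 | h0
    · rw [← h0]
      simp [hu_def, d10, d20]
    · have hxne : x ≠ 0 := ne_of_gt h0
      have e1 := ode1 x ⟨h0, hx.2⟩
      have e2 := ode2 x ⟨h0, hx.2⟩
      have h3 : derivWithin (derivWithin h1 (Icc 0 r)) (Icc 0 r) x
          - derivWithin (derivWithin h2 (Icc 0 r)) (Icc 0 r) x
          = derivWithin h2 (Icc 0 r) x / x - derivWithin h1 (Icc 0 r) x / x := by linarith
      rw [hu_def]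
      simp only [h3]
      field_simp
      ring
  have hvd : DifferentiableOn ℝ (fun x => x * u x) (Icc 0 r) :=
    fun x hx => (hv x hx).differentiableWithinAt
  have hvz : ∀ x ∈ Ico (0:ℝ) r, derivWithin (fun x => x * u x) (Icc 0 r) x = 0 :=
    fun x hx => (hv x (Ico_subset_Icc_self hx)).derivWithin (husd x (Ico_subset_Icc_self hx))
  have hconst := constant_of_derivWithin_zero hvd hvz
  have hu0 : ∀ x ∈ Icc (0:ℝ) r, u x = 0 := by
    intro x hx
    rcases eq_or_lt_of_le hx.1 with h0 | h0
    · rw [← h0]; simp [hu_def, d10, d20]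
    · have := hconst x hx
      simp only [zero_mul] at this
      rcases mul_eq_zero.1 this with h | h
      · exact absurd h (ne_of_gt h0)
      · exact h
  have hfd : DifferentiableOn ℝ (fun x => h1 x - h2 x) (Icc 0 r) := D1.sub D2
  have hfz : ∀ x ∈ Ico (0:ℝ) r, derivWithin (fun x => h1 x - h2 x) (Icc 0 r) x = 0 := by
    intro x hx
    have hx' := Ico_subset_Icc_self hx
    rw [derivWithin_fun_sub (D1 x hx') (D2 x hx')]
    exact hu0 x hx'
  have hfin := constant_of_derivWithin_zero hfd hfz
  intro x hx
  have := hfin x hx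
  simp only [h10, h20, sub_zero] at this
  linarith

lemma linear_inverse_aux (r : ℝ) (hr : 0 < r) (G : ℝ → ℝ) (hG : Continuous G) :
    ∃ h : ℝ → ℝ, LinSol r G h ∧
      (∀ x ∈ Icc (0:ℝ) r,
        |derivWithin (derivWithin h (Icc 0 r)) (Icc 0 r) x|
          ≤ 3 / 2 * sSup ((fun t => |G t|) '' Icc 0 r)) ∧
      (∀ x ∈ Icc (0:ℝ) r,
        h x = ∫ t in (0:ℝ)..x, (Real.log x - Real.log t) * t * G t) := by
  have hcont1 : Continuous fun t : ℝ => t * G t := continuous_id.mul hG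
  have hcont2 : Continuous fun t : ℝ => (t * Real.log t) * G t := Real.continuous_mul_log.mul hG
  set F : ℝ → ℝ := fun x => ∫ t in (0:ℝ)..x, t * G t with hFdef
  set J : ℝ → ℝ := fun x => ∫ t in (0:ℝ)..x, (t * Real.log t) * G t with hJdef
  have hF : ∀ x : ℝ, HasDerivAt F (x * G x) x :=
    fun x => (hcont1.integral_hasStrictDerivAt 0 x).hasDerivAt
  have hJ : ∀ x : ℝ, HasDerivAt J ((x * Real.log x) * G x) x :=
    fun x => (hcont2.integral_hasStrictDerivAt 0 x).hasDerivAt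
  have hF0 : F 0 = 0 := intervalIntegral.integral_same
  have hJ0 : J 0 = 0 := intervalIntegral.integral_same
  have hFc : Continuous F := Differentiable.continuous (fun x => (hF x).differentiableAt)
  have hJc : Continuous J := Differentiable.continuous (fun x => (hJ x).differentiableAt)
  set h : ℝ → ℝ := fun x => Real.log x * F x - J x with hhdef
  set h1 : ℝ → ℝ := fun x => F x / x with h1def
  set h2 : ℝ → ℝ := fun x => if x = 0 then G 0 / 2 else G x - F x / x ^ 2 with h2def
  have h0 : h 0 = 0 := by simp [hhdef, hF0, hJ0]
  -- slope limit : F x / x → 0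
  have hslope : Filter.Tendsto (fun y => F y / y) (nhdsWithin 0 {(0:ℝ)}ᶜ) (nhds 0) := by
    have hsl := hasDerivAt_iff_tendsto_slope.1 (hF 0)
    have heq : slope F 0 = fun y => F y / y := by
      funext y; rw [slope_def_field]; simp [hF0]
    rw [heq] at hsl
    simpa using hsl
  have hslopeR : Filter.Tendsto (fun y => F y / y) (nhdsWithin 0 (Ioi (0:ℝ))) (nhds 0) :=
    hslope.mono_left (nhdsWithin_mono 0 (fun x hx => ne_of_gt hx))
  -- l'Hopital : F x / x^2 → G 0 / 2
  have hFx2 : Filter.Tendsto (fun x => F x / x ^ 2) (nhdsWithin 0 (Ioi (0:ℝ))) (nhds (G 0 / 2)) := by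
    apply HasDerivAt.lhopital_zero_right_on_Ioo (f' := fun x => x * G x)
      (g' := fun x => 2 * x) (one_pos : (0:ℝ) < 1)
    · exact fun x _ => hF x
    · intro x _
      have := hasDerivAt_pow 2 x
      simpa using this
    · exact fun x hx => mul_ne_zero two_ne_zero (ne_of_gt hx.1)
    · have := hFc.tendsto 0
      rw [hF0] at this
      exact this.mono_left nhdsWithin_le_nhds
    · have : Filter.Tendsto (fun x : ℝ => x ^ 2) (nhds 0) (nhds 0) := by
        simpa using (continuous_pow 2).tendsto (0:ℝ)
      exact this.mono_left nhdsWithin_le_nhds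
    · apply Filter.Tendsto.congr' _ (((hG.tendsto 0).mono_left nhdsWithin_le_nhds).div_const 2)
      filter_upwards [self_mem_nhdsWithin] with x (hx : x ∈ Ioi (0:ℝ))
      have hxne : x ≠ 0 := ne_of_gt hx
      field_simp
  have htend2 : Filter.Tendsto (fun x => G x - F x / x ^ 2) (nhdsWithin 0 (Ioi (0:ℝ)))
      (nhds (G 0 / 2)) := by
    have := ((hG.tendsto 0).mono_left nhdsWithin_le_nhds).sub hFx2
    rw [show G 0 - G 0 / 2 = G 0 / 2 by ring] at this
    exact this
  -- derivative of h on (0, ∞)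
  have hxpos : ∀ x : ℝ, 0 < x → HasDerivAt h (h1 x) x := by
    intro x hx
    have hl : HasDerivAt Real.log x⁻¹ x := Real.hasDerivAt_log (ne_of_gt hx)
    have hd : HasDerivAt (fun x => Real.log x * F x - J x)
        (x⁻¹ * F x + Real.log x * (x * G x) - x * Real.log x * G x) x :=
      (hl.mul (hF x)).sub (hJ x)
    convert hd using 1
    have hxne : x ≠ 0 := ne_of_gt hx
    simp only [h1def]
    field_simp
    ring
  -- derivative of h at 0 within Ici 0
  have key0 : HasDerivWithinAt h 0 (Ici (0:ℝ)) 0 := by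
    apply hasDerivWithinAt_Ici_of_tendsto_deriv (s := Ioi (0:ℝ))
    · exact fun x hx => ((hxpos x hx).differentiableAt).differentiableWithinAt
    · have hxlog : Filter.Tendsto (fun x : ℝ => x * Real.log x) (nhdsWithin 0 (Ioi (0:ℝ)))
          (nhds 0) := by
        have := Real.continuous_mul_log.tendsto 0
        simp only [Real.log_zero, mul_zero, zero_mul] at this
        exact this.mono_left nhdsWithin_le_nhds
      have t1 : Filter.Tendsto (fun x => Real.log x * F x) (nhdsWithin 0 (Ioi (0:ℝ)))
          (nhds 0) := by
        apply Filter.Tendsto.congr' _ (by simpa using hxlog.mul hslopeR)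
        filter_upwards [self_mem_nhdsWithin] with x (hx : x ∈ Ioi (0:ℝ))
        have hxne : x ≠ 0 := ne_of_gt hx
        field_simp
      have t2 : Filter.Tendsto J (nhdsWithin 0 (Ioi (0:ℝ))) (nhds 0) := by
        have := hJc.tendsto 0
        rw [hJ0] at this
        exact this.mono_left nhdsWithin_le_nhds
      have : Filter.Tendsto h (nhdsWithin 0 (Ioi (0:ℝ))) (nhds 0) := by
        simpa using t1.sub t2
      rw [ContinuousWithinAt, h0]
      exact this
    · exact self_mem_nhdsWithin
    · apply Filter.Tendsto.congr' _ hslopeR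
      filter_upwards [self_mem_nhdsWithin] with x (hx : x ∈ Ioi (0:ℝ))
      exact ((hxpos x hx).deriv).symm
  have key1 : ∀ x ∈ Icc (0:ℝ) r, HasDerivWithinAt h (h1 x) (Icc 0 r) x := by
    intro x hx
    rcases eq_or_lt_of_le hx.1 with hx0 | hx0
    · rw [← hx0]
      have : h1 0 = 0 := by simp [h1def, hF0]
      rw [this]
      exact key0.mono Icc_subset_Ici_self
    · exact (hxpos x hx0).hasDerivWithinAt
  -- derivative of h1 on (0, ∞)
  have h1pos : ∀ x : ℝ, 0 < x → HasDerivAt h1 (G x - F x / x ^ 2) x := by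
    intro x hx
    have hxne : x ≠ 0 := ne_of_gt hx
    have hd : HasDerivAt (fun x => F x / x) ((x * G x * x - F x * 1) / x ^ 2) x :=
      (hF x).div (hasDerivAt_id x) hxne
    convert hd using 1
    field_simp
  have key20 : HasDerivWithinAt h1 (G 0 / 2) (Ici (0:ℝ)) 0 := by
    apply hasDerivWithinAt_Ici_of_tendsto_deriv (s := Ioi (0:ℝ))
    · exact fun x hx => ((h1pos x hx).differentiableAt).differentiableWithinAt
    · have : h1 0 = 0 := by simp [h1def, hF0]
      rw [ContinuousWithinAt, this]
      exact hslopeR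
    · exact self_mem_nhdsWithin
    · apply Filter.Tendsto.congr' _ htend2
      filter_upwards [self_mem_nhdsWithin] with x (hx : x ∈ Ioi (0:ℝ))
      exact ((h1pos x hx).deriv).symm
  have key2 : ∀ x ∈ Icc (0:ℝ) r, HasDerivWithinAt h1 (h2 x) (Icc 0 r) x := by
    intro x hx
    rcases eq_or_lt_of_le hx.1 with hx0 | hx0
    · rw [← hx0]
      have : h2 0 = G 0 / 2 := by simp [h2def]
      rw [this]
      exact key20.mono Icc_subset_Ici_self
    · have : h2 x = G x - F x / x ^ 2 := by simp [h2def, ne_of_gt hx0]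
      rw [this]
      exact (h1pos x hx0).hasDerivWithinAt
  -- continuity of h2
  have h2cont : ContinuousOn h2 (Icc 0 r) := by
    intro x hx
    rcases eq_or_lt_of_le hx.1 with hx0 | hx0
    · rw [← hx0]
      have hci : ContinuousWithinAt h2 (Ici (0:ℝ)) 0 := by
        rw [ContinuousWithinAt, show h2 0 = G 0 / 2 by simp [h2def],
          ← Set.Ioi_insert, nhdsWithin_insert]
        refine Filter.Tendsto.sup ?_ ?_
        · have := tendsto_pure_nhds h2 0
          rw [show h2 0 = G 0 / 2 by simp [h2def]] at this
          exact this
        · apply Filter.Tendsto.congr' _ htend2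
          filter_upwards [self_mem_nhdsWithin] with y (hy : y ∈ Ioi (0:ℝ))
          simp [h2def, ne_of_gt (show (0:ℝ) < y from hy)]
      exact hci.mono Icc_subset_Ici_self
    · have hca : ContinuousAt h2 x := by
        have hev : (fun y => G y - F y / y ^ 2) =ᶠ[nhds x] h2 := by
          filter_upwards [eventually_ne_nhds (ne_of_gt hx0)] with y hy
          simp [h2def, hy]
        exact (ContinuousAt.sub (hG.continuousAt)
          ((hFc.continuousAt).div ((continuous_pow 2).continuousAt)
            (by positivity))).congr hev
      exact hca.continuousWithinAt
  have husd : UniqueDiffOn ℝ (Icc (0:ℝ) r) := uniqueDiffOn_Icc hr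
  have dW1 : EqOn (derivWithin h (Icc 0 r)) h1 (Icc 0 r) :=
    fun x hx => (key1 x hx).derivWithin (husd x hx)
  have dW2 : ∀ x ∈ Icc (0:ℝ) r, derivWithin (derivWithin h (Icc 0 r)) (Icc 0 r) x = h2 x := by
    intro x hx
    rw [derivWithin_congr dW1 (dW1 hx)]
    exact (key2 x hx).derivWithin (husd x hx)
  have cd : ContDiffOn ℝ 2 h (Icc 0 r) := by
    rw [show (2:WithTop ℕ∞) = 1 + 1 by norm_num, contDiffOn_succ_iff_derivWithin husd]
    refine ⟨fun x hx => (key1 x hx).differentiableWithinAt, by simp, ?_⟩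
    apply ContDiffOn.congr _ dW1
    rw [show (1:WithTop ℕ∞) = 0 + 1 by norm_num, contDiffOn_succ_iff_derivWithin husd]
    refine ⟨fun x hx => (key2 x hx).differentiableWithinAt, by simp, ?_⟩
    rw [contDiffOn_zero]
    exact h2cont.congr (fun x hx => (key2 x hx).derivWithin (husd x hx))
  -- bound
  set M := sSup ((fun t => |G t|) '' Icc 0 r) with hMdef
  have hMb : ∀ t ∈ Icc (0:ℝ) r, |G t| ≤ M := by
    intro t ht
    exact le_csSup (IsCompact.bddAbove_image isCompact_Icc (hG.abs.continuousOn))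
      (mem_image_of_mem _ ht)
  have hM0 : 0 ≤ M := le_trans (abs_nonneg (G 0)) (hMb 0 ⟨le_refl 0, hr.le⟩)
  have hFb : ∀ x ∈ Icc (0:ℝ) r, |F x| ≤ M * x ^ 2 / 2 := by
    intro x hx
    have key := intervalIntegral.norm_integral_le_abs_of_norm_le
      (f := fun t => t * G t) (g := fun t => M * t) (μ := MeasureTheory.volume)
      (a := 0) (b := x) ?_ ((continuous_const.mul continuous_id).intervalIntegrable 0 x)
    · have : (∫ t in (0:ℝ)..x, M * t) = M * (x ^ 2 / 2) := by
        rw [intervalIntegral.integral_const_mul, integral_id]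
        ring
      calc |F x| ≤ |∫ t in (0:ℝ)..x, M * t| := key
        _ = M * x ^ 2 / 2 := by
            rw [this, abs_of_nonneg (by positivity)]; ring
    · rw [uIoc_of_le hx.1]
      refine (MeasureTheory.ae_restrict_iff' measurableSet_Ioc).2
        (Filter.Eventually.of_forall fun t ht => ?_)
      have ht1 : 0 < t := ht.1
      have htr : t ∈ Icc (0:ℝ) r := ⟨ht1.le, ht.2.trans hx.2⟩
      calc ‖t * G t‖ = t * |G t| := by
            rw [Real.norm_eq_abs, abs_mul, abs_of_nonneg ht1.le]
        _ ≤ t * M := mul_le_mul_of_nonneg_left (hMb t htr) ht1.le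
        _ = M * t := mul_comm t M
  have hbound : ∀ x ∈ Icc (0:ℝ) r, |h2 x| ≤ 3 / 2 * M := by
    intro x hx
    rcases eq_or_lt_of_le hx.1 with hx0 | hx0
    · rw [← hx0]
      have : h2 0 = G 0 / 2 := by simp [h2def]
      rw [this, abs_div]
      have := hMb 0 ⟨le_refl 0, hr.le⟩
      rw [abs_of_nonneg (by norm_num : (0:ℝ) ≤ 2)]
      linarith
    · have hxne : x ≠ 0 := ne_of_gt hx0
      have hx2 : (0:ℝ) < x ^ 2 := by positivity
      have : h2 x = G x - F x / x ^ 2 := by simp [h2def, hxne]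
      rw [this]
      have hF' : |F x / x ^ 2| ≤ M / 2 := by
        rw [abs_div, abs_of_nonneg hx2.le, div_le_iff₀ hx2]
        calc |F x| ≤ M * x ^ 2 / 2 := hFb x hx
          _ = M / 2 * x ^ 2 := by ring
      calc |G x - F x / x ^ 2| ≤ |G x| + |F x / x ^ 2| := abs_sub _ _
        _ ≤ M + M / 2 := add_le_add (hMb x hx) hF'
        _ = 3 / 2 * M := by ring
  refine ⟨h, ⟨cd, h0, ?_, ?_⟩, ?_, ?_⟩
  · rw [dW1 ⟨le_refl 0, hr.le⟩]
    simp [h1def, hF0]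
  · intro x hx
    have hx' : x ∈ Icc (0:ℝ) r := Ioc_subset_Icc_self hx
    rw [dW2 x hx', dW1 hx']
    have hxne : x ≠ 0 := ne_of_gt hx.1
    simp only [h2def, h1def, if_neg hxne]
    field_simp
    ring
  · intro x hx
    rw [dW2 x hx]
    exact hbound x hx
  · intro x hx
    have e : EqOn (fun t => (Real.log x - Real.log t) * t * G t)
        (fun t => Real.log x * (t * G t) - (t * Real.log t) * G t) (uIcc 0 x) :=
      fun t _ => by ring
    rw [intervalIntegral.integral_congr e,
      intervalIntegral.integral_sub (show
          IntervalIntegrable (fun t => Real.log x * (t * G t)) MeasureTheory.volume 0 x from (continuous_const.mul hcont1).intervalIntegrable 0 x)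
        (hcont2.intervalIntegrable 0 x),
      intervalIntegral.integral_const_mul]

/-- For every `r > 0` and continuous `g : [0,r] → ℝ` there is a unique `h ∈ C²₀([0,r])`
with `h'' + h'/x = g` on `(0,r]`; moreover `‖h''‖_{C⁰} ≤ (3/2)‖g‖_{C⁰}` and
`h(x) = ∫₀ˣ (log x - log t) t g(t) dt`. -/
theorem linear_inverse_C2 (r : ℝ) (hr : 0 < r) (g : ℝ → ℝ)
    (hg : ContinuousOn g (Icc 0 r)) :
    ∃ h : ℝ → ℝ, LinSol r g h ∧
      (∀ h' : ℝ → ℝ, LinSol r g h' → EqOn h' h (Icc 0 r)) ∧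
      (∀ x ∈ Icc (0:ℝ) r,
        |derivWithin (derivWithin h (Icc 0 r)) (Icc 0 r) x|
          ≤ 3 / 2 * sSup ((fun t => |g t|) '' Icc 0 r)) ∧
      (∀ x ∈ Icc (0:ℝ) r,
        h x = ∫ t in (0:ℝ)..x, (Real.log x - Real.log t) * t * g t) := by
  set G : ℝ → ℝ := fun x => g (min (max x 0) r) with hGdef
  have hGc : Continuous G := by
    apply hg.comp_continuous ((continuous_id.max continuous_const).min continuous_const)
    intro x
    exact ⟨le_min (le_max_right x 0) hr.le, min_le_right _ r⟩
  have hGg : ∀ x ∈ Icc (0:ℝ) r, G x = g x := by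
    intro x hx
    simp only [hGdef]
    rw [max_eq_left hx.1, min_eq_left hx.2]
  obtain ⟨h, hsol, hbound, hform⟩ := linear_inverse_aux r hr G hGc
  have hsolg : LinSol r g h := by
    refine ⟨hsol.1, hsol.2.1, hsol.2.2.1, fun x hx => ?_⟩
    rw [hsol.2.2.2 x hx]
    exact hGg x (Ioc_subset_Icc_self hx)
  have himg : (fun t => |g t|) '' Icc 0 r = (fun t => |G t|) '' Icc 0 r :=
    Set.image_congr (fun t ht => by rw [hGg t ht])
  refine ⟨h, hsolg, fun h' hh' => linsol_unique r hr g h' h hh' hsolg, ?_, ?_⟩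
  · intro x hx
    rw [himg]
    exact hbound x hx
  · intro x hx
    rw [hform x hx]
    apply intervalIntegral.integral_congr
    intro t ht
    rw [uIcc_of_le hx.1] at ht
    have : t ∈ Icc (0:ℝ) r := ⟨ht.1, ht.2.trans hx.2⟩
    simp only
    rw [hGg t this]
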